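/- Let $(A, \mathfrak{m})$ be a Cohen-Macaulay local ring of dimension $d = 1$ with infinite residue field, $I$ an $\mathfrak{m}$-primary ideal, and $Q = (a)$ a minimal reduction of $I$. If $e_1(I) = e_0(I) - \ell_A(A/I) + 1$, then $I^3 = aI^2$ and $\ell_A(I^2/aI) = 1$. -/

import Mathlib

open IsLocalRing

/-- A Noetherian local ring is Cohen–Macaulay of dimension `d` iff its Krull dimension
is `d` and there is a regular sequence of length `d` in the maximal ideal. -/
def IsCohenMacaulayLocal (A : Type*) [CommRing A] [IsLocalRing A] (d : ℕ) : Prop :=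
  ringKrullDim A = d ∧
    ∃ rs : List A, rs.length = d ∧ (∀ x ∈ rs, x ∈ maximalIdeal A) ∧
      RingTheory.Sequence.IsRegular A rs

/-- `I` is primary to the maximal ideal (i.e. `𝔪`-primary). -/
def IsPrimaryToMax (A : Type*) [CommRing A] [IsLocalRing A] (I : Ideal A) : Prop :=
  I ≤ maximalIdeal A ∧ maximalIdeal A ≤ I.radical

/-- The length of a module, as the Krull dimension of its submodule lattice. -/
noncomputable def moduleLength (A M : Type*) [CommRing A] [AddCommGroup M]
    [Module A M] : WithBot ℕ∞ :=
  Order.krullDim (Submodule A M)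

open Order

section latticeaux

variable {β γ : Type*} [PartialOrder β] [PartialOrder γ]

/-- Split a strict chain in a product into chains in the factors. -/
private lemma exists_split : ∀ (n : ℕ) (p : LTSeries (β × γ)), p.length = n →
    ∃ (q : LTSeries β) (r : LTSeries γ), q.last = p.last.1 ∧ r.last = p.last.2 ∧
      n ≤ q.length + r.length := by
  intro n
  induction n with
  | zero =>
    intro p _
    exact ⟨RelSeries.singleton _ p.last.1, RelSeries.singleton _ p.last.2, rfl, rfl, by simp⟩
  | succ n ih =>
    intro p hp
    have hlen : p.eraseLast.length = n := by simp [hp]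
    obtain ⟨q, r, hq, hr, hle⟩ := ih p.eraseLast hlen
    have hstep : p.eraseLast.last < p.last :=
      p.eraseLast_last_rel_last (by omega)
    rw [Prod.lt_iff] at hstep
    rcases hstep with ⟨h1, h2⟩ | ⟨h1, h2⟩
    · rcases h2.lt_or_eq with h2' | h2'
      · exact ⟨q.snoc p.last.1 (hq ▸ h1), r.snoc p.last.2 (hr ▸ h2'), by simp, by simp,
          by simp only [RelSeries.snoc_length]; omega⟩
      · exact ⟨q.snoc p.last.1 (hq ▸ h1), r, by simp, by rw [hr, h2'],
          by simp only [RelSeries.snoc_length]; omega⟩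
    · rcases h1.lt_or_eq with h1' | h1'
      · exact ⟨q.snoc p.last.1 (hq ▸ h1'), r.snoc p.last.2 (hr ▸ h2), by simp, by simp,
          by simp only [RelSeries.snoc_length]; omega⟩
      · exact ⟨q, r.snoc p.last.2 (hr ▸ h2), by rw [hq, h1'], by simp,
          by simp only [RelSeries.snoc_length]; omega⟩

end latticeaux

section modlattice

variable {α : Type*} [Lattice α] [IsModularLattice α]

private lemma krullDim_eq_add_of_modular (a : α) :
    krullDim α = krullDim {b : α // b ≤ a} + krullDim {b : α // a ≤ b} := by
  haveI : Nonempty α := ⟨a⟩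
  haveI h1 : Nonempty {b : α // b ≤ a} := ⟨⟨a, le_rfl⟩⟩
  haveI h2 : Nonempty {b : α // a ≤ b} := ⟨⟨a, le_rfl⟩⟩
  apply le_antisymm
  · refine iSup_le fun p => ?_
    have hf : StrictMono (fun x : α =>
        ((⟨x ⊓ a, inf_le_right⟩, ⟨x ⊔ a, le_sup_right⟩) :
          {b : α // b ≤ a} × {b : α // a ≤ b})) := by
      intro x y h
      have h2 := strictMono_inf_prod_sup (z := a) h
      rw [Prod.lt_iff] at h2 ⊢
      simpa [Subtype.mk_lt_mk, Subtype.mk_le_mk] using h2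
    obtain ⟨q, r, -, -, hle⟩ := exists_split _ (p.map _ hf) rfl
    calc (p.length : WithBot ℕ∞) ≤ ((q.length + r.length : ℕ) : WithBot ℕ∞) := by
          simp only [LTSeries.map_length] at hle; exact_mod_cast hle
      _ = (q.length : WithBot ℕ∞) + (r.length : WithBot ℕ∞) := by push_cast; ring
      _ ≤ _ := add_le_add (LTSeries.length_le_krullDim q) (LTSeries.length_le_krullDim r)
  · have key : ∀ (q : LTSeries {b : α // b ≤ a}) (r : LTSeries {b : α // a ≤ b}),
        ((q.length + r.length : ℕ) : WithBot ℕ∞) ≤ krullDim α := by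
      intro q r
      let q' : LTSeries α := q.map Subtype.val fun _ _ h => h
      let r' : LTSeries α := r.map Subtype.val fun _ _ h => h
      have hle : q'.last ≤ r'.head := le_trans q.last.2 r.head.2
      rcases eq_or_lt_of_le hle with h | h
      · have := LTSeries.length_le_krullDim (RelSeries.smash q' r' h)
        exact this
      · have := LTSeries.length_le_krullDim (RelSeries.append q' r' h)
        refine le_trans ?_ this
        have hq : q'.length = q.length := rfl
        have hr : r'.length = r.length := rfl
        have : q.length + r.length ≤ (RelSeries.append q' r' h).length := by
          simp only [RelSeries.append_length]; omega
        exact_mod_cast this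
    have hA : krullDim {b : α // b ≤ a} ≠ ⊥ := by
      intro h
      exact absurd (krullDim_nonneg (α := {b : α // b ≤ a})) (by simp [h])
    have hB : krullDim {b : α // a ≤ b} ≠ ⊥ := by
      intro h
      exact absurd (krullDim_nonneg (α := {b : α // a ≤ b})) (by simp [h])
    have hC : krullDim α ≠ ⊥ := by
      intro h
      exact absurd (krullDim_nonneg (α := α)) (by simp [h])
    lift krullDim {b : α // b ≤ a} to ℕ∞ using hA with A' hA'
    lift krullDim {b : α // a ≤ b} to ℕ∞ using hB with B' hB'
    lift krullDim α to ℕ∞ using hC with C' hC'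
    rw [← WithBot.coe_add, WithBot.coe_le_coe]
    have hAs : (A' : WithBot ℕ∞) = ((⨆ q : LTSeries {b : α // b ≤ a}, (q.length : ℕ∞)) : ℕ∞) := by
      rw [hA', krullDim_eq_iSup_length, WithBot.coe_iSup (OrderTop.bddAbove _)]
    have hBs : (B' : WithBot ℕ∞) = ((⨆ r : LTSeries {b : α // a ≤ b}, (r.length : ℕ∞)) : ℕ∞) := by
      rw [hB', krullDim_eq_iSup_length, WithBot.coe_iSup (OrderTop.bddAbove _)]
    rw [WithBot.coe_inj] at hAs hBs
    rw [hAs, hBs, ENat.iSup_add]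
    refine iSup_le fun q => ?_
    rw [ENat.add_iSup]
    refine iSup_le fun r => ?_
    have := key q r
    rw [show ((q.length + r.length : ℕ) : WithBot ℕ∞)
        = (((q.length : ℕ∞) + (r.length : ℕ∞) : ℕ∞) : WithBot ℕ∞) from by push_cast; rfl] at this
    exact WithBot.coe_le_coe.mp this

end modlattice

section modulelen

variable (A : Type*) {M N : Type*} [CommRing A] [AddCommGroup M] [Module A M]
  [AddCommGroup N] [Module A N]

private lemma moduleLength_nonneg : 0 ≤ moduleLength A M :=
  krullDim_nonneg

private lemma moduleLength_congr (e : M ≃ₗ[A] N) : moduleLength A M = moduleLength A N :=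
  krullDim_eq_of_orderIso (Submodule.orderIsoMapComap e)

private lemma moduleLength_additive (p : Submodule A M) :
    moduleLength A M = moduleLength A p + moduleLength A (M ⧸ p) := by
  rw [moduleLength, krullDim_eq_add_of_modular p]
  congr 1
  · exact (krullDim_eq_of_orderIso (Submodule.MapSubtype.orderIso p)).symm
  · exact (krullDim_eq_of_orderIso (Submodule.comapMkQRelIso p)).symm

private lemma moduleLength_zero_of_subsingleton [Subsingleton M] : moduleLength A M = 0 := by
  haveI : Unique (Submodule A M) := by
    refine ⟨⟨⊥⟩, fun S => ?_⟩
    ext m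
    rw [Subsingleton.elim m 0]
    simp
  exact krullDim_eq_zero_of_unique

private lemma moduleLength_eq_zero_iff : moduleLength A M = 0 ↔ Subsingleton M := by
  constructor
  · intro h
    by_contra hs
    rw [not_subsingleton_iff_nontrivial] at hs
    have hbt : (⊥ : Submodule A M) < ⊤ := bot_lt_top
    let c : LTSeries (Submodule A M) :=
      ⟨1, ![⊥, ⊤], by
        intro i
        fin_cases i
        simpa using hbt⟩
    have := LTSeries.length_le_krullDim c
    rw [show moduleLength A M = Order.krullDim (Submodule A M) from rfl] at h
    rw [h] at this
    norm_num at this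
  · intro h
    exact moduleLength_zero_of_subsingleton A

private lemma withbot_extract (a b : WithBot ℕ∞) (q : ℕ) (ha : 0 ≤ a) (hb : 0 ≤ b)
    (h : a + b = (q : WithBot ℕ∞)) : ∃ s t : ℕ, a = s ∧ b = t ∧ s + t = q := by
  lift a to ℕ∞ using (by rintro rfl; simp at ha) with a' ha'
  lift b to ℕ∞ using (by rintro rfl; simp at hb) with b' hb'
  rw [← WithBot.coe_add, show ((q : ℕ) : WithBot ℕ∞) = (((q : ℕ∞)) : WithBot ℕ∞) from rfl,
    WithBot.coe_inj] at h
  have hat : a' ≠ ⊤ := by rintro rfl; simp at h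
  have hbt : b' ≠ ⊤ := by rintro rfl; simp [add_comm] at h
  lift a' to ℕ using hat with a''
  lift b' to ℕ using hbt with b''
  exact ⟨a'', b'', rfl, rfl, by exact_mod_cast h⟩

end modulelen

section ideallen

variable {A : Type*} [CommRing A]

private lemma length_quot_add {J K : Ideal A} (h : J ≤ K) :
    moduleLength A (A ⧸ J) =
      moduleLength A (↥K ⧸ Submodule.comap K.subtype J) + moduleLength A (A ⧸ K) := by
  rw [moduleLength_additive A (M := A ⧸ J) (Submodule.map J.mkQ K)]
  congr 1
  · refine (moduleLength_congr A ?_).symm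
    let f : ↥K →ₗ[A] A ⧸ J := J.mkQ.comp K.subtype
    have hker : LinearMap.ker f = Submodule.comap K.subtype J := by
      rw [LinearMap.ker_comp, Submodule.ker_mkQ]
    have hrange : LinearMap.range f = Submodule.map J.mkQ K := by
      rw [LinearMap.range_comp, Submodule.range_subtype]
    exact (Submodule.quotEquivOfEq _ _ hker.symm).trans
      (f.quotKerEquivRange.trans (LinearEquiv.ofEq _ _ hrange))
  · exact moduleLength_congr A (Submodule.quotientQuotientEquivQuotient J K h)

private lemma mul_regular_quot {x : A} (hx : ∀ z : A, x * z = 0 → z = 0) (J : Ideal A) :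
    moduleLength A
      (↥(Ideal.span {x}) ⧸
        Submodule.comap (Ideal.span {x}).subtype ((Ideal.span {x} * J : Ideal A))) =
      moduleLength A (A ⧸ J) := by
  let f : A →ₗ[A] ↥(Ideal.span {x} : Ideal A) :=
    { toFun := fun z => ⟨x * z, Ideal.mul_mem_right z _ (Ideal.mem_span_singleton_self x)⟩
      map_add' := by intros; ext; simp [mul_add]
      map_smul' := by intros; ext; simp [smul_eq_mul]; ring }
  let g := (Submodule.comap (Ideal.span {x}).subtype
      ((Ideal.span {x} * J : Ideal A))).mkQ.comp f
  have hsurj : Function.Surjective g := by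
    apply Function.Surjective.comp (Submodule.mkQ_surjective _)
    rintro ⟨y, hy⟩
    rw [Ideal.mem_span_singleton'] at hy
    obtain ⟨c, hc⟩ := hy
    exact ⟨c, by ext; simp only [f, LinearMap.coe_mk, AddHom.coe_mk]; rw [mul_comm]; exact hc⟩
  have hker : LinearMap.ker g = J := by
    ext z
    simp only [g, LinearMap.ker_comp, Submodule.ker_mkQ, Submodule.mem_comap,
      LinearMap.coe_mk, AddHom.coe_mk, Submodule.coe_subtype, f]
    constructor
    · intro hz
      rw [Ideal.mem_span_singleton_mul] at hz
      obtain ⟨w, hw, hxw⟩ := hz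
      have h0 : x * (z - w) = 0 := by rw [mul_sub, hxw, sub_self]
      have := hx _ h0
      exact (sub_eq_zero.mp this) ▸ hw
    · intro hz
      exact Ideal.mul_mem_mul (Ideal.mem_span_singleton_self x) hz
  have e := LinearMap.quotKerEquivOfSurjective g hsurj
  rw [hker] at e
  exact (moduleLength_congr A e).symm

end ideallen

private def LpFun (H : ℕ → ℕ) : ℕ → ℕ := fun n => Nat.casesOn n 0 H

/-- Dimension one case: if `e₁ = e₀ - ℓ_A(A/I) + 1` then `I³ = aI²` and
`ℓ_A(I²/aI) = 1`.  Here `H n = ℓ_A(A/I^{n+1})` (so `H 0 = ℓ_A(A/I)`) and the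
Hilbert coefficients `e 0, e 1` are specified by `H n = e₀(n+1) - e₁` for `n ≫ 0`. -/
theorem dim_one_case (A : Type*) [CommRing A] [IsLocalRing A] [IsNoetherianRing A]
    [Infinite (ResidueField A)]
    (hCM : IsCohenMacaulayLocal A 1)
    (I Q : Ideal A) (hI : IsPrimaryToMax A I)
    (x : A) (hQ : Q = Ideal.span {x}) (hQI : Q ≤ I)
    (hred : ∃ r : ℕ, I ^ (r + 1) = Q * I ^ r)
    (H : ℕ → ℕ)
    (hH : ∀ n : ℕ, moduleLength A (A ⧸ I ^ (n + 1)) = (H n : ℕ∞))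
    (e : ℕ → ℤ) (N : ℕ)
    (hHS : ∀ n ≥ N, (H n : ℤ) = e 0 * (n + 1) - e 1)
    (he : e 1 = e 0 - (H 0 : ℤ) + 1) :
    I ^ 3 = Ideal.span {x} * I ^ 2 ∧
      moduleLength A
        (↥(I ^ 2) ⧸ Submodule.comap (I ^ 2).subtype (Ideal.span {x} * I)) = 1 := by
  obtain ⟨r, hr⟩ := hred
  subst hQ
  obtain ⟨-, rs, hlen, hmem, hreg⟩ := hCM
  obtain ⟨y, rfl⟩ := List.length_eq_one_iff.mp hlen
  -- `y` is a nonzerodivisor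
  have hy : ∀ z : A, y * z = 0 → z = 0 := by
    intro z hz
    have h0 := hreg.toIsWeaklyRegular.regular_mod_prev 0 (by simp)
    have hS : (Ideal.ofList ([y].take 0) • ⊤ : Submodule A A) = ⊥ := by
      simp [Ideal.ofList]
    have hmk : (Submodule.Quotient.mk z :
        A ⧸ (Ideal.ofList ([y].take 0) • ⊤ : Submodule A A)) = Submodule.Quotient.mk 0 := by
      apply h0
      show _ • Submodule.Quotient.mk z = _ • Submodule.Quotient.mk 0
      rw [← Submodule.Quotient.mk_smul, ← Submodule.Quotient.mk_smul]
      congr 1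
      show y • z = y • (0:A)
      simp [smul_eq_mul, hz]
    rw [Submodule.Quotient.eq] at hmk
    rw [hS] at hmk
    simpa using hmk
  have hyreg : IsSMulRegular A y := by
    intro a b hab
    have h1 : y * (a - b) = 0 := by
      have : y * a = y * b := hab
      rw [mul_sub, this, sub_self]
    exact sub_eq_zero.mp (hy _ h1)
  -- `x` is a nonzerodivisor
  have hrad : maximalIdeal A ≤ (Ideal.span {x}).radical := by
    refine le_trans hI.2 ?_
    rw [← Ideal.radical_pow I (n := r+1) (Nat.succ_ne_zero r)]
    exact Ideal.radical_mono (hr ▸ Ideal.mul_le_left)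
  have hxreg : ∀ z : A, x * z = 0 → z = 0 := by
    intro z hz
    have hxt : Ideal.span {x} ≤ Ideal.torsionOf A A z := by
      rw [Ideal.span_le]
      intro w hw
      rw [Set.mem_singleton_iff] at hw
      subst hw
      rw [SetLike.mem_coe, Ideal.mem_torsionOf_iff, smul_eq_mul, hz]
    have hann : maximalIdeal A ≤ (Ideal.torsionOf A A z).radical :=
      le_trans hrad (Ideal.radical_mono hxt)
    obtain ⟨k, hk⟩ := Ideal.exists_pow_le_of_le_radical_of_fg hann (IsNoetherian.noetherian _)
    have hyk : y ^ k ∈ (maximalIdeal A) ^ k := Ideal.pow_mem_pow (hmem y (by simp)) k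
    have hz0 : y ^ k • z = 0 := by
      have := hk hyk
      rwa [Ideal.mem_torsionOf_iff] at this
    exact (hyreg.pow k) (show y ^ k • z = y ^ k • (0:A) by simpa using hz0)
  -- generalities
  have hpowmem : ∀ n : ℕ, (Ideal.span {x} * I ^ n : Ideal A) ≤ I ^ (n+1) := fun n => by
    rw [pow_succ']
    exact Ideal.mul_mono hQI le_rfl
  have hLp : ∀ n : ℕ, moduleLength A (A ⧸ (I^n : Ideal A)) = ((LpFun H n : ℕ∞) : WithBot ℕ∞) := by
    intro n
    cases n with
    | zero =>
      haveI hs : Subsingleton (A ⧸ (I^0 : Ideal A)) :=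
        Submodule.Quotient.subsingleton_iff.mpr (by simp [Ideal.one_eq_top])
      simpa [show LpFun H 0 = 0 from rfl] using moduleLength_zero_of_subsingleton A (M := A ⧸ (I^0 : Ideal A))
    | succ n => exact hH n
  -- length of A/(x)
  have hsub : I^(r+1) ≤ (Ideal.span {x} : Ideal A) := hr ▸ Ideal.mul_le_left
  obtain ⟨d0, c, hd0, hc, hdc⟩ := withbot_extract _ _ (H r)
    (moduleLength_nonneg A) (moduleLength_nonneg A)
    (by rw [← length_quot_add hsub]; exact hH r)
  -- the key local lengths
  have hVex : ∀ n : ℕ, ∃ v : ℕ,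
      moduleLength A (↥(I^(n+1)) ⧸ Submodule.comap (I^(n+1)).subtype
        ((Ideal.span {x} * I^n : Ideal A))) = (v : WithBot ℕ∞) ∧ v + LpFun H (n+1) = LpFun H n + c := by
    intro n
    have e1 := length_quot_add (hpowmem n)
    have e2 := length_quot_add (show (Ideal.span {x} * I^n : Ideal A) ≤ Ideal.span {x} from
      Ideal.mul_le_left)
    rw [mul_regular_quot hxreg (I^n)] at e2
    have h : moduleLength A (↥(I^(n+1)) ⧸ Submodule.comap (I^(n+1)).subtype
        ((Ideal.span {x} * I^n : Ideal A))) + ((LpFun H (n+1) : ℕ∞) : WithBot ℕ∞)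
        = (((LpFun H n + c : ℕ) : ℕ∞) : WithBot ℕ∞) := by
      rw [← hLp (n+1), ← e1, e2, hLp n, hc]
      push_cast
      ring
    obtain ⟨s, t, hs, ht, hst⟩ := withbot_extract _ _ (LpFun H n + c)
      (moduleLength_nonneg A) (by exact_mod_cast Nat.zero_le (LpFun H (n+1))) h
    have ht' : t = LpFun H (n+1) := by exact_mod_cast ht.symm
    exact ⟨s, hs, by omega⟩
  choose V hV1 hV2 using hVex
  -- stability propagation and vanishing
  have hprop : ∀ m : ℕ, I^(m+1) = Ideal.span {x} * I^m →
      ∀ n, m ≤ n → I^(n+1) = Ideal.span {x} * I^n := by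
    intro m hm n hn
    induction n, hn using Nat.le_induction with
    | base => exact hm
    | succ n hn ih =>
      rw [pow_succ]
      conv_lhs => rw [ih]
      rw [mul_assoc, ← pow_succ]
  have hvz : ∀ n, I^(n+1) = Ideal.span {x} * I^n → V n = 0 := by
    intro n hn
    haveI : Subsingleton (↥(I^(n+1)) ⧸ Submodule.comap (I^(n+1)).subtype
        ((Ideal.span {x} * I^n : Ideal A))) :=
      Submodule.Quotient.subsingleton_iff.mpr
        (Submodule.comap_subtype_eq_top.mpr (le_of_eq hn))
    have h0 := moduleLength_zero_of_subsingleton A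
      (M := ↥(I^(n+1)) ⧸ Submodule.comap (I^(n+1)).subtype ((Ideal.span {x} * I^n : Ideal A)))
    rw [hV1 n] at h0
    exact_mod_cast h0
  have hzv : ∀ n, V n = 0 → I^(n+1) = Ideal.span {x} * I^n := by
    intro n hn
    have h0 : moduleLength A (↥(I^(n+1)) ⧸ Submodule.comap (I^(n+1)).subtype
        ((Ideal.span {x} * I^n : Ideal A))) = 0 := by rw [hV1 n, hn]; simp
    have hss := (moduleLength_eq_zero_iff A).mp h0
    exact le_antisymm (Submodule.comap_subtype_eq_top.mp
      (Submodule.Quotient.subsingleton_iff.mp hss)) (hpowmem n)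
  -- telescoping
  have tele : ∀ n : ℕ, LpFun H n + (∑ k ∈ Finset.range n, V k) = n * c := by
    intro n
    induction n with
    | zero =>
      have h0 : LpFun H 0 = 0 := rfl
      simp [h0]
    | succ n ih =>
      rw [Finset.sum_range_succ, add_mul, one_mul]
      have h2 := hV2 n
      linarith [ih, h2]
  -- c = e 0
  have hNm0 : N ≤ max N r := le_max_left _ _
  have hrm0 : r ≤ max N r := le_max_right _ _
  have hVm0 : V (max N r + 1) = 0 := hvz _ (hprop r hr _ (by omega))
  have h2m0 := hV2 (max N r + 1)
  have hLp1 : LpFun H (max N r + 1 + 1) = H (max N r + 1) := rfl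
  have hLp2 : LpFun H (max N r + 1) = H (max N r) := rfl
  have hcc : H (max N r + 1) = H (max N r) + c := by omega
  have hce : (c : ℤ) = e 0 := by
    have ha := hHS (max N r + 1) (by omega)
    have hb := hHS (max N r) hNm0
    have hq : ((H (max N r + 1) : ℕ) : ℤ) = ((H (max N r) : ℕ) : ℤ) + (c : ℤ) := by
      exact_mod_cast congrArg (Nat.cast (R := ℤ)) hcc
    push_cast at ha hb hq ⊢
    linear_combination ha - hb - hq
  -- the total sum equals V 0 + 1
  have hNm1 : N ≤ max N 2 := le_max_left _ _
  have h2m1 : 2 ≤ max N 2 := le_max_right _ _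
  have hT := tele (max N 2 + 1)
  have hLp3 : LpFun H (max N 2 + 1) = H (max N 2) := rfl
  have hHm1 := hHS (max N 2) hNm1
  have hV0 := hV2 0
  have hLp4 : LpFun H 1 = H 0 := rfl
  have hLp5 : LpFun H 0 = 0 := rfl
  have hLp6 : LpFun H (0+1) = H 0 := rfl
  have hV0' : V 0 + H 0 = c := by omega
  have hTV0 : (∑ k ∈ Finset.range (max N 2 + 1), V k) = V 0 + 1 := by
    have hTz : ((H (max N 2) : ℤ)) + (∑ k ∈ Finset.range (max N 2 + 1), V k : ℕ)
        = ((max N 2 + 1 : ℕ) : ℤ) * (c : ℤ) := by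
      rw [hLp3] at hT
      exact_mod_cast congrArg (Nat.cast (R := ℤ)) hT
    have hV0z : ((V 0 : ℤ)) + (H 0 : ℤ) = (c : ℤ) := by exact_mod_cast hV0'
    have goalz : ((∑ k ∈ Finset.range (max N 2 + 1), V k : ℕ) : ℤ) = (V 0 : ℤ) + 1 := by
      push_cast at hTz hV0z hHm1 ⊢
      rw [hce] at hTz hV0z
      linarith [he]
    exact_mod_cast goalz
  -- V 1 is positive
  have hV1pos : V 1 ≠ 0 := by
    intro h10
    have hall : ∀ b ∈ Finset.range (max N 2 + 1), b ≠ 0 → V b = 0 := by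
      intro b _ hb0
      exact hvz b (hprop 1 (hzv 1 h10) b (by omega))
    have hTeq : (∑ k ∈ Finset.range (max N 2 + 1), V k) = V 0 :=
      Finset.sum_eq_single_of_mem 0 (Finset.mem_range.mpr (by omega)) hall
    omega
  -- V 0 + V 1 + V 2 bounded by the sum
  have hsum3 : V 0 + V 1 + V 2 ≤ ∑ k ∈ Finset.range (max N 2 + 1), V k := by
    have hsub3 : ∑ k ∈ Finset.range 3, V k ≤ ∑ k ∈ Finset.range (max N 2 + 1), V k :=
      Finset.sum_le_sum_of_subset (Finset.range_subset_range.mpr (by omega))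
    simpa [Finset.sum_range_succ] using hsub3
  have hV1eq : V 1 = 1 := by omega
  have hV2eq : V 2 = 0 := by omega
  constructor
  · exact hzv 2 hV2eq
  · have hfin := hV1 1
    rw [hV1eq, pow_one] at hfin
    exact_mod_cast hfin
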